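/- Let L be a number field with r real embeddings and 2s imaginary embeddings, and let O ⊆ O_L be a subring of finite additive index (i.e., an order of L). Then there is a group isomorphism Oˣ ≅ μ(O) × ℤ^{r+s−1}, where Oˣ is the unit group of O. -/

import Mathlib

open NumberField
open DirectSum

private lemma multFinInt_torsionfree (n : ℕ) :
    ∀ x : Multiplicative (Fin n → ℤ), IsOfFinOrder x → x = 1 := by
  intro x hx
  obtain ⟨k, hk, hxk⟩ := isOfFinOrder_iff_pow_eq_one.mp hx
  have h0 : k • x.toAdd = 0 := by
    have := congrArg Multiplicative.toAdd hxk
    simpa [toAdd_pow] using this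
  have hx0 : x.toAdd = 0 := by
    funext i
    have h1 : (k : ℤ) * x.toAdd i = 0 := by
      have := congrFun h0 i
      simpa [nsmul_eq_mul] using this
    rcases mul_eq_zero.mp h1 with h | h
    · exact absurd (by exact_mod_cast h) hk.ne'
    · exact h
  show Multiplicative.ofAdd x.toAdd = 1
  rw [hx0]; rfl

private lemma split_torsion {G MF MD : Type*} [CommGroup G] [CommGroup MF] [CommGroup MD]
    [Finite MD] (hMF : ∀ x : MF, IsOfFinOrder x → x = 1) (E : G ≃* MF × MD) :
    Nonempty (G ≃* (CommGroup.torsion G) × MF) := by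
  have hfst : ∀ t : G, IsOfFinOrder t → (E t).1 = 1 := fun t ht =>
    hMF _ (((MonoidHom.fst MF MD).isOfFinOrder (E.toMonoidHom.isOfFinOrder ht)))
  have htors : ∀ d : MD, IsOfFinOrder ((1, d) : MF × MD) := by
    intro d
    refine isOfFinOrder_iff_pow_eq_one.mpr ⟨Nat.card MD, Nat.card_pos, ?_⟩
    rw [Prod.pow_mk, one_pow, pow_card_eq_one']; rfl
  let φ : CommGroup.torsion G ≃* MD :=
  { toFun := fun t => (E (t : G)).2
    invFun := fun d => ⟨E.symm (1, d),
      (CommGroup.mem_torsion _).mpr (E.symm.toMonoidHom.isOfFinOrder (htors d))⟩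
    left_inv := by
      intro t
      ext
      have h1 : (E (t : G)).1 = 1 := hfst _ ((CommGroup.mem_torsion _).mp t.2)
      show E.symm (1, (E (t : G)).2) = (t : G)
      rw [← h1]
      exact E.symm_apply_apply _
    right_inv := by
      intro d
      show (E (E.symm (1, d))).2 = d
      rw [E.apply_symm_apply]
    map_mul' := by
      intro t₁ t₂
      show (E ((t₁ : G) * (t₂ : G))).2 = _
      rw [map_mul]
      rfl }
  refine ⟨{ toFun := fun g => (φ.symm (E g).2, (E g).1)
            invFun := fun p => E.symm (p.2, φ p.1)
            left_inv := ?_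
            right_inv := ?_
            map_mul' := ?_ }⟩
  · intro g
    show E.symm ((E g).1, φ (φ.symm (E g).2)) = g
    rw [φ.apply_symm_apply]
    exact E.symm_apply_apply g
  · intro p
    have h2 : E (E.symm (p.2, φ p.1)) = (p.2, φ p.1) := E.apply_symm_apply _
    show (_, _) = p
    rw [h2]
    show (φ.symm (φ p.1), p.2) = p
    rw [φ.symm_apply_apply]
  · intro g h
    show (φ.symm (E (g * h)).2, (E (g * h)).1) = _
    rw [map_mul]
    exact Prod.ext (by rw [Prod.fst_mul, Prod.snd_mul, map_mul]; rfl) rfl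

private lemma exists_decomp (G : Type*) [CommGroup G] (hFG : AddGroup.FG (Additive G)) :
    ∃ n : ℕ, Nonempty (G ≃* (CommGroup.torsion G) × Multiplicative (Fin n → ℤ)) := by
  haveI := hFG
  obtain ⟨n, ι, fι, p, hp, e, ⟨f⟩⟩ := AddCommGroup.equiv_free_prod_directSum_zmod (Additive G)
  haveI : ∀ i : ι, NeZero (p i ^ e i) := fun i => ⟨pow_ne_zero _ (hp i).ne_zero⟩
  haveI : Finite (⨁ i, ZMod (p i ^ e i)) :=
    Finite.of_equiv _ DFinsupp.equivFunOnFintype.symm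
  let f' : Additive G ≃+ (Fin n → ℤ) × (⨁ i, ZMod (p i ^ e i)) :=
    f.trans ((Finsupp.addEquivFunOnFinite).prodCongr (AddEquiv.refl _))
  let E : G ≃* Multiplicative (Fin n → ℤ) × Multiplicative (⨁ i, ZMod (p i ^ e i)) :=
    (AddEquiv.toMultiplicativeRight f').trans (MulEquiv.prodMultiplicative _ _)
  obtain ⟨eq⟩ := split_torsion (multFinInt_torsionfree n) E
  exact ⟨n, ⟨eq⟩⟩

set_option maxHeartbeats 1000000 in
set_option synthInstance.maxHeartbeats 200000 in
/-- Let `L` be a number field with `r` real embeddings and `2s` imaginary (non-real) embeddings,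
and let `O ⊆ 𝓞 L` be a subring of finite additive index (an order of `L`). Then
`Oˣ ≅ μ(O) × ℤ^(r+s-1)`, where `μ(O)`, the group of roots of unity of `O`, is the torsion
subgroup of `Oˣ`. -/
theorem units_of_order_iso (L : Type*) [Field L] [NumberField L] (r s : ℕ)
    (hr : Nat.card {σ : L →+* ℂ // ∀ x, (σ x).im = 0} = r)
    (hs : Nat.card {σ : L →+* ℂ // ¬ ∀ x, (σ x).im = 0} = 2 * s)
    (O : Subring (𝓞 L)) (hO : O.toAddSubgroup.index ≠ 0) :
    Nonempty (Oˣ ≃* (CommGroup.torsion Oˣ) × Multiplicative (Fin (r + s - 1) → ℤ)) := by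
  classical
  -- Step 1 : the rank of the units of 𝓞 L is r + s - 1
  have hRealIff : ∀ σ : L →+* ℂ, ComplexEmbedding.IsReal σ ↔ ∀ x, (σ x).im = 0 := by
    intro σ
    rw [ComplexEmbedding.isReal_iff, RingHom.ext_iff]
    exact forall_congr' fun x => by
      rw [ComplexEmbedding.conjugate_coe_eq, Complex.conj_eq_iff_im]
  have hr2 : InfinitePlace.nrRealPlaces L = r := by
    rw [← hr, ← NumberField.InfinitePlace.card_real_embeddings, ← Nat.card_eq_fintype_card]
    exact Nat.card_congr (Equiv.subtypeEquivRight hRealIff)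
  have hs2 : InfinitePlace.nrComplexPlaces L = s := by
    have h := NumberField.InfinitePlace.card_complex_embeddings L
    have h2 : Nat.card {σ : L →+* ℂ // ¬ ∀ x, (σ x).im = 0} =
        2 * InfinitePlace.nrComplexPlaces L := by
      rw [← h, ← Nat.card_eq_fintype_card]
      exact Nat.card_congr (Equiv.subtypeEquivRight fun σ => by rw [hRealIff σ]).symm
    omega
  have hrank : NumberField.Units.rank L = r + s - 1 := by
    rw [NumberField.Units.rank, InfinitePlace.card_eq_nrRealPlaces_add_nrComplexPlaces, hr2, hs2]
  have htor_iff : ∀ x : (𝓞 L)ˣ, x ∈ NumberField.Units.torsion L ↔ IsOfFinOrder x := by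
    intro x
    rw [NumberField.Units.torsion, CommGroup.mem_torsion]
  -- Step 2 : the ideal generated by the index is contained in O
  set k := O.toAddSubgroup.index with hkdef
  have hkO : ∀ x : 𝓞 L, (k : 𝓞 L) * x ∈ O := by
    intro x
    have := O.toAddSubgroup.nsmul_index_mem x
    rwa [nsmul_eq_mul] at this
  set I : Ideal (𝓞 L) := Ideal.span {(k : 𝓞 L)} with hIdef
  have hIO : ∀ x ∈ I, x ∈ O := by
    intro x hx
    obtain ⟨c, hc⟩ := Ideal.mem_span_singleton'.mp hx
    rw [← hc, mul_comm]
    exact hkO c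
  have hInebot : I ≠ ⊥ := by
    rw [hIdef, Ne, Ideal.span_singleton_eq_bot]
    intro h
    exact hO (by exact_mod_cast h)
  haveI : Fintype (𝓞 L ⧸ I) := @Fintype.ofFinite _ (Ideal.finiteQuotientOfFreeOfNeBot I hInebot)
  haveI hfinu : Finite (𝓞 L ⧸ I)ˣ := inferInstance
  haveI : Nonempty (𝓞 L ⧸ I)ˣ := ⟨1⟩
  set N := Nat.card (𝓞 L ⧸ I)ˣ with hNdef
  have hNpos : 0 < N := Nat.card_pos
  -- Step 3 : N-th powers of units of 𝓞 L lie in O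
  have hmem : ∀ u : (𝓞 L)ˣ, ((u : 𝓞 L) ^ N) ∈ O := by
    intro u
    have h1 : (Units.map (Ideal.Quotient.mk I).toMonoidHom u) ^ N = 1 := pow_card_eq_one'
    have h2 : Ideal.Quotient.mk I ((u : 𝓞 L) ^ N) = Ideal.Quotient.mk I 1 := by
      have := congrArg (Units.val) h1
      simpa using this
    have h3 : (u : 𝓞 L) ^ N - 1 ∈ I := Ideal.Quotient.eq.mp h2
    have h4 : (u : 𝓞 L) ^ N = ((u : 𝓞 L) ^ N - 1) + 1 := by ring
    rw [h4]
    exact O.add_mem (hIO _ h3) O.one_mem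
  -- Step 4 : the homomorphism ψ : (𝓞 L)ˣ →* Oˣ , u ↦ u ^ N
  let ψ : (𝓞 L)ˣ →* Oˣ :=
  { toFun := fun u =>
      { val := ⟨(u : 𝓞 L) ^ N, hmem u⟩
        inv := ⟨((u⁻¹ : (𝓞 L)ˣ) : 𝓞 L) ^ N, hmem u⁻¹⟩
        val_inv := by
          ext
          simp only [MulMemClass.coe_mul, OneMemClass.coe_one]
          rw [← mul_pow, Units.mul_inv, one_pow]
        inv_val := by
          ext
          simp only [MulMemClass.coe_mul, OneMemClass.coe_one]
          rw [← mul_pow, Units.inv_mul, one_pow] }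
    map_one' := by
      apply Units.ext
      apply Subtype.ext
      simp only [Units.val_one, OneMemClass.coe_one]
      rw [one_pow]
    map_mul' := fun u v => by
      apply Units.ext
      apply Subtype.ext
      simp only [Units.val_mul, MulMemClass.coe_mul]
      rw [mul_pow] }
  -- the embedding j : Oˣ →* (𝓞 L)ˣ
  let j : Oˣ →* (𝓞 L)ˣ := Units.map (O.subtype : O →* 𝓞 L)
  have hj_inj : Function.Injective j := Units.map_injective (fun a b h => Subtype.ext h)
  have hjψ : ∀ u : (𝓞 L)ˣ, j (ψ u) = u ^ N := by
    intro u
    apply Units.ext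
    show ((u : 𝓞 L) ^ N : 𝓞 L) = ((u ^ N : (𝓞 L)ˣ) : 𝓞 L)
    rw [Units.val_pow_eq_pow_val]
  -- j reflects finite order
  have hj_fin : ∀ y : Oˣ, IsOfFinOrder (j y) → IsOfFinOrder y := by
    intro y hy
    obtain ⟨n, hn, hyn⟩ := isOfFinOrder_iff_pow_eq_one.mp hy
    refine isOfFinOrder_iff_pow_eq_one.mpr ⟨n, hn, hj_inj ?_⟩
    rw [map_pow, hyn, map_one]
  -- ψ reflects finite order
  have hψ_fin : ∀ x : (𝓞 L)ˣ, IsOfFinOrder (ψ x) → IsOfFinOrder x := by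
    intro x hx
    obtain ⟨n, hn, hxn⟩ := isOfFinOrder_iff_pow_eq_one.mp hx
    refine isOfFinOrder_iff_pow_eq_one.mpr ⟨N * n, Nat.mul_pos hNpos hn, ?_⟩
    have : j ((ψ x) ^ n) = 1 := by rw [hxn, map_one]
    rw [map_pow, hjψ] at this
    rw [pow_mul]
    exact this
  -- Step 5 : Oˣ is finitely generated
  haveI : Module.Finite ℤ (Additive Oˣ) := by
    haveI : IsNoetherian ℤ (Additive (𝓞 L)ˣ) := isNoetherian_of_isNoetherianRing_of_finite ℤ _
    exact Module.Finite.of_injective (MonoidHom.toAdditive j).toIntLinearMap hj_inj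
  obtain ⟨a, ⟨e⟩⟩ := exists_decomp Oˣ (Module.Finite.iff_addGroup_fg.mp inferInstance)
  -- Step 6 : a ≤ rank L
  let m₁ : Multiplicative (Fin a → ℤ) →* ((𝓞 L)ˣ ⧸ NumberField.Units.torsion L) :=
    (QuotientGroup.mk' (NumberField.Units.torsion L)).comp
      (j.comp (e.symm.toMonoidHom.comp (MonoidHom.inr _ _)))
  have hm₁ : Function.Injective m₁ := by
    refine (injective_iff_map_eq_one m₁).mpr ?_
    intro x hx
    have h1 : j (e.symm (1, x)) ∈ NumberField.Units.torsion L := by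
      rwa [← QuotientGroup.eq_one_iff]
    have h2 : IsOfFinOrder (j (e.symm (1, x))) := (htor_iff _).mp h1
    have h3 : IsOfFinOrder (e.symm (1, x)) := hj_fin _ h2
    have h4 : IsOfFinOrder ((1, x) : (CommGroup.torsion Oˣ) × Multiplicative (Fin a → ℤ)) := by
      have := e.toMonoidHom.isOfFinOrder h3
      rwa [MulEquiv.coe_toMonoidHom, e.apply_symm_apply] at this
    exact multFinInt_torsionfree a x
      ((MonoidHom.snd (CommGroup.torsion Oˣ) (Multiplicative (Fin a → ℤ))).isOfFinOrder h4)
  letI : AddCommGroup (Additive ((𝓞 L)ˣ ⧸ NumberField.Units.torsion L)) := Additive.addCommGroup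
  have ineq1 : a ≤ NumberField.Units.rank L := by
    let am₁ : (Fin a → ℤ) →+ Additive ((𝓞 L)ˣ ⧸ NumberField.Units.torsion L) :=
      AddMonoidHom.toMultiplicativeLeft.symm m₁
    have hinj : Function.Injective am₁.toIntLinearMap := hm₁
    calc a = Module.finrank ℤ (Fin a → ℤ) := (Module.finrank_fin_fun ℤ).symm
    _ ≤ Module.finrank ℤ (Additive ((𝓞 L)ˣ ⧸ NumberField.Units.torsion L)) :=
        LinearMap.finrank_le_finrank_of_injective hinj
    _ = NumberField.Units.rank L := NumberField.Units.rank_modTorsion L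
  -- Step 7 : rank L ≤ a
  let m₂ : (𝓞 L)ˣ →* Multiplicative (Fin a → ℤ) :=
    (MonoidHom.snd _ _).comp (e.toMonoidHom.comp ψ)
  have hker : ∀ x ∈ NumberField.Units.torsion L, m₂ x = 1 := by
    intro x hx
    have h1 : IsOfFinOrder x := (htor_iff _).mp hx
    exact multFinInt_torsionfree a _
      ((MonoidHom.snd _ _).isOfFinOrder ((e.toMonoidHom.comp ψ).isOfFinOrder h1))
  let m₂' : ((𝓞 L)ˣ ⧸ NumberField.Units.torsion L) →* Multiplicative (Fin a → ℤ) :=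
    QuotientGroup.lift _ m₂ hker
  have hm₂' : Function.Injective m₂' := by
    refine (injective_iff_map_eq_one m₂').mpr ?_
    intro q hq
    induction q using QuotientGroup.induction_on with
    | H x =>
      have hx : m₂ x = 1 := hq
      -- (e (ψ x)).2 = 1, so e (ψ x) = (t, 1) with t torsion
      have h5 : (e (ψ x)).2 = 1 := hx
      have htor : IsOfFinOrder (e (ψ x)) := by
        obtain ⟨n, hn, hnt⟩ := isOfFinOrder_iff_pow_eq_one.mp
          ((CommGroup.mem_torsion _).mp (e (ψ x)).1.2)
        refine isOfFinOrder_iff_pow_eq_one.mpr ⟨n, hn, ?_⟩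
        have hfst : ((e (ψ x)).1) ^ n = 1 := by
          apply Subtype.ext
          rw [SubmonoidClass.coe_pow, OneMemClass.coe_one]
          exact hnt
        have : (e (ψ x)) ^ n = ((e (ψ x)).1 ^ n, (e (ψ x)).2 ^ n) := rfl
        rw [this, hfst, h5, one_pow]
        rfl
      have h6 : IsOfFinOrder (ψ x) := by
        have := e.symm.toMonoidHom.isOfFinOrder htor
        rwa [MulEquiv.coe_toMonoidHom, e.symm_apply_apply] at this
      have h7 : IsOfFinOrder x := hψ_fin x h6
      rw [QuotientGroup.eq_one_iff]
      exact (htor_iff _).mpr h7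
  have ineq2 : NumberField.Units.rank L ≤ a := by
    let am₂ : Additive ((𝓞 L)ˣ ⧸ NumberField.Units.torsion L) →+ (Fin a → ℤ) :=
      AddMonoidHom.toMultiplicativeRight.symm m₂'
    have hinj : Function.Injective
        (@AddMonoidHom.toIntLinearMap (Additive ((𝓞 L)ˣ ⧸ NumberField.Units.torsion L))
          (Fin a → ℤ) _ _ am₂) := hm₂'
    calc NumberField.Units.rank L
        = Module.finrank ℤ (Additive ((𝓞 L)ˣ ⧸ NumberField.Units.torsion L)) :=
          (NumberField.Units.rank_modTorsion L).symm
    _ ≤ Module.finrank ℤ (Fin a → ℤ) := LinearMap.finrank_le_finrank_of_injective hinj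
    _ = a := Module.finrank_fin_fun ℤ
  have ha : a = r + s - 1 := by omega
  exact ha ▸ ⟨e⟩
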